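/- For a connected non-bipartite K-regular graph, iterating the mean-aggregation operator T = (I + A/K)·(K/(K+1)) (equivalently (I+A)/(K+1) acting on features, where A is the normalized adjacency) converges: T^l H tends to the constant vector whose entries are the average of H, for every initial feature vector H. -/

import Mathlib

open Finset Matrix

section Aux

variable {n : Type*} [Fintype n] [Nonempty n] [DecidableEq n]

private lemma aux_pow_entry_nonneg (S : Matrix n n ℝ) (h : ∀ i j, 0 ≤ S i j) :
    ∀ l i j, 0 ≤ (S ^ l) i j := by
  intro l
  induction l with
  | zero =>
    intro i j
    simp only [pow_zero, Matrix.one_apply]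
    split <;> norm_num
  | succ l ih =>
    intro i j
    rw [pow_succ', Matrix.mul_apply]
    exact Finset.sum_nonneg fun k _ => mul_nonneg (h i k) (ih k j)

private lemma aux_pow_row_sum (S : Matrix n n ℝ) (h : ∀ i, ∑ j, S i j = 1) :
    ∀ l i, ∑ j, (S ^ l) i j = 1 := by
  intro l
  induction l with
  | zero => intro i; simp [Matrix.one_apply]
  | succ l ih =>
    intro i
    rw [pow_succ']
    simp only [Matrix.mul_apply]
    rw [Finset.sum_comm]
    simp only [← Finset.mul_sum]
    simp only [ih, mul_one]
    exact h i

private lemma aux_osc_contract (S : Matrix n n ℝ) (ε : ℝ)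
    (hε : ∀ i j, ε ≤ S i j) (hrow : ∀ i, ∑ j, S i j = 1) (x : n → ℝ) :
    univ.sup' univ_nonempty (S.mulVec x) - univ.inf' univ_nonempty (S.mulVec x) ≤
      (1 - (Fintype.card n : ℝ) * ε) *
        (univ.sup' univ_nonempty x - univ.inf' univ_nonempty x) := by
  obtain ⟨i, -, hi⟩ := exists_mem_eq_sup' univ_nonempty (S.mulVec x)
  obtain ⟨j, -, hj⟩ := exists_mem_eq_inf' univ_nonempty (S.mulVec x)
  rw [hi, hj]
  set M := univ.sup' univ_nonempty x with hM
  set m := univ.inf' univ_nonempty x with hm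
  have hxM : ∀ k, x k ≤ M := fun k => le_sup' x (mem_univ k)
  have hmx : ∀ k, m ≤ x k := fun k => inf'_le x (mem_univ k)
  have hmM : m ≤ M := le_trans (hmx (Classical.arbitrary n)) (hxM _)
  set μ : n → ℝ := fun k => min (S i k) (S j k) with hμ
  have h1 : ∀ k, 0 ≤ S i k - μ k := fun k => sub_nonneg.2 (min_le_left _ _)
  have h2 : ∀ k, 0 ≤ S j k - μ k := fun k => sub_nonneg.2 (min_le_right _ _)
  have hsum : (Fintype.card n : ℝ) * ε ≤ ∑ k, μ k := by
    calc (Fintype.card n : ℝ) * ε = ∑ _k : n, ε := by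
          simp [mul_comm]
      _ ≤ ∑ k, μ k := Finset.sum_le_sum fun k _ => le_min (hε i k) (hε j k)
  have e1 : S.mulVec x i - S.mulVec x j
      = ∑ k, (S i k - μ k) * x k - ∑ k, (S j k - μ k) * x k := by
    simp only [Matrix.mulVec, dotProduct]
    rw [← Finset.sum_sub_distrib, ← Finset.sum_sub_distrib]
    congr 1
    ext k
    ring
  have b1 : ∑ k, (S i k - μ k) * x k ≤ (1 - ∑ k, μ k) * M := by
    calc ∑ k, (S i k - μ k) * x k ≤ ∑ k, (S i k - μ k) * M :=
          Finset.sum_le_sum fun k _ => mul_le_mul_of_nonneg_left (hxM k) (h1 k)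
      _ = (1 - ∑ k, μ k) * M := by
          rw [← Finset.sum_mul, Finset.sum_sub_distrib, hrow i]
  have b2 : (1 - ∑ k, μ k) * m ≤ ∑ k, (S j k - μ k) * x k := by
    calc (1 - ∑ k, μ k) * m = ∑ k, (S j k - μ k) * m := by
          rw [← Finset.sum_mul, Finset.sum_sub_distrib, hrow j]
      _ ≤ ∑ k, (S j k - μ k) * x k :=
          Finset.sum_le_sum fun k _ => mul_le_mul_of_nonneg_left (hmx k) (h2 k)
  have key : S.mulVec x i - S.mulVec x j ≤ (1 - ∑ k, μ k) * (M - m) := by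
    rw [e1]
    nlinarith [b1, b2]
  calc S.mulVec x i - S.mulVec x j ≤ (1 - ∑ k, μ k) * (M - m) := key
    _ ≤ (1 - (Fintype.card n : ℝ) * ε) * (M - m) :=
        mul_le_mul_of_nonneg_right (by linarith) (by linarith)

private lemma aux_osc_pow (S : Matrix n n ℝ) (r : ℝ) (hr0 : 0 ≤ r)
    (hS : ∀ x : n → ℝ,
      univ.sup' univ_nonempty (S.mulVec x) - univ.inf' univ_nonempty (S.mulVec x) ≤
        r * (univ.sup' univ_nonempty x - univ.inf' univ_nonempty x)) :
    ∀ (q : ℕ) (x : n → ℝ),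
      univ.sup' univ_nonempty ((S ^ q).mulVec x) - univ.inf' univ_nonempty ((S ^ q).mulVec x) ≤
        r ^ q * (univ.sup' univ_nonempty x - univ.inf' univ_nonempty x) := by
  intro q
  induction q with
  | zero => intro x; simp [Matrix.one_mulVec]
  | succ q ih =>
    intro x
    have h1 : (S ^ (q + 1)).mulVec x = (S ^ q).mulVec (S.mulVec x) := by
      rw [Matrix.mulVec_mulVec, ← pow_succ]
    rw [h1]
    calc univ.sup' univ_nonempty ((S ^ q).mulVec (S.mulVec x)) -
          univ.inf' univ_nonempty ((S ^ q).mulVec (S.mulVec x)) ≤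
        r ^ q * (univ.sup' univ_nonempty (S.mulVec x) - univ.inf' univ_nonempty (S.mulVec x)) :=
          ih (S.mulVec x)
      _ ≤ r ^ q * (r * (univ.sup' univ_nonempty x - univ.inf' univ_nonempty x)) :=
          mul_le_mul_of_nonneg_left (hS x) (pow_nonneg hr0 q)
      _ = r ^ (q + 1) * (univ.sup' univ_nonempty x - univ.inf' univ_nonempty x) := by ring

end Aux

theorem mean_aggregation_oversmoothing {V : Type*} [Fintype V] [Nonempty V]
    [DecidableEq V]
    (G : SimpleGraph V) [DecidableRel G.Adj]
    (hconn : G.Connected) (hnonbip : ¬ G.Colorable 2)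
    (K : ℕ) (hreg : G.IsRegularOfDegree K)
    (T : Matrix V V ℝ)
    (hT : T = fun a b => if a = b ∨ G.Adj a b then 1 / (K + 1 : ℝ) else 0) :
    ∀ H : V → ℝ,
      Filter.Tendsto (fun l : ℕ => (T ^ l).mulVec H) Filter.atTop
        (nhds (fun _ => (∑ v, H v) / (Fintype.card V : ℝ))) := by
  have hK1 : (0 : ℝ) < (K : ℝ) + 1 := by positivity
  -- basic entries
  have hTnn : ∀ a b, 0 ≤ T a b := by
    intro a b; rw [hT]
    dsimp only
    split <;> positivity
  have hTdiag : ∀ a, T a a = 1 / ((K : ℝ) + 1) := by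
    intro a; rw [hT]; simp
  have hTadj : ∀ a b, G.Adj a b → T a b = 1 / ((K : ℝ) + 1) := by
    intro a b hab; rw [hT]; simp [hab]
  -- row sums are 1
  have hTrow : ∀ a, ∑ b, T a b = 1 := by
    intro a
    have hfil : univ.filter (fun b => a = b ∨ G.Adj a b) = insert a (G.neighborFinset a) := by
      ext b
      simp only [mem_filter, mem_univ, true_and, mem_insert, SimpleGraph.mem_neighborFinset]
      exact or_congr eq_comm Iff.rfl
    have hcard : (univ.filter (fun b => a = b ∨ G.Adj a b)).card = K + 1 := by
      rw [hfil, Finset.card_insert_of_notMem (by simp), G.card_neighborFinset_eq_degree, hreg a]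
    have : ∑ b, T a b = ∑ b ∈ univ.filter (fun b => a = b ∨ G.Adj a b), (1 / ((K : ℝ) + 1)) := by
      rw [Finset.sum_filter, hT]
    rw [this, Finset.sum_const, hcard, nsmul_eq_mul]
    push_cast
    field_simp
  -- symmetry
  have hTsymm : Tᵀ = T := by
    ext a b
    rw [Matrix.transpose_apply, hT]
    dsimp only
    exact if_congr (or_congr eq_comm (G.adj_comm b a)) rfl rfl
  have hpowsymm : ∀ l, (T ^ l)ᵀ = T ^ l := by
    intro l; rw [Matrix.transpose_pow, hTsymm]
  have hpownn : ∀ l i j, 0 ≤ (T ^ l) i j := aux_pow_entry_nonneg T hTnn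
  have hpowrow : ∀ l i, ∑ j, (T ^ l) i j = 1 := aux_pow_row_sum T hTrow
  have hpowcol : ∀ l j, ∑ i, (T ^ l) i j = 1 := by
    intro l j
    have : ∀ i, (T ^ l) i j = (T ^ l) j i := by
      intro i
      conv_lhs => rw [← hpowsymm l, Matrix.transpose_apply]
    simp only [this]
    exact hpowrow l j
  -- positivity along distances
  have hpos : ∀ (l : ℕ) (u v : V), G.dist u v ≤ l → 0 < (T ^ l) u v := by
    intro l
    induction l with
    | zero =>
      intro u v h
      have : u = v := (hconn.dist_eq_zero_iff).mp (Nat.le_zero.mp h)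
      subst this
      simp [Matrix.one_apply]
    | succ l ih =>
      intro u v h
      rw [pow_succ', Matrix.mul_apply]
      by_cases hle : G.dist u v ≤ l
      · have hterm : 0 < T u u * (T ^ l) u v :=
          mul_pos (by rw [hTdiag]; positivity) (ih u v hle)
        calc (0 : ℝ) < T u u * (T ^ l) u v := hterm
          _ ≤ ∑ w, T u w * (T ^ l) w v :=
            Finset.single_le_sum (fun w _ => mul_nonneg (hTnn u w) (hpownn l w v)) (mem_univ u)
      · have hd : G.dist u v = l + 1 := le_antisymm h (Nat.succ_le_of_lt (Nat.lt_of_not_le hle))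
        obtain ⟨p, hp⟩ := SimpleGraph.exists_walk_of_dist_ne_zero (G := G) (u := u) (v := v) (by omega)
        cases p with
        | nil => simp [SimpleGraph.Walk.length_nil] at hp; rw [SimpleGraph.dist_self] at hd; omega
        | @cons _ w _ hadj q =>
          rw [SimpleGraph.Walk.length_cons, hd] at hp
          have hq : G.dist w v ≤ l := by
            have := SimpleGraph.dist_le q
            omega
          have hterm : 0 < T u w * (T ^ l) w v :=
            mul_pos (by rw [hTadj u w hadj]; positivity) (ih w v hq)
          calc (0 : ℝ) < T u w * (T ^ l) w v := hterm
            _ ≤ ∑ w', T u w' * (T ^ l) w' v :=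
              Finset.single_le_sum (fun w' _ => mul_nonneg (hTnn u w') (hpownn l w' v))
                (mem_univ w)
  -- uniform positivity of T ^ D
  set D := Fintype.card V with hD
  have hD0 : 0 < D := Fintype.card_pos
  have hdist : ∀ u v : V, G.dist u v ≤ D := by
    intro u v
    obtain ⟨p, hpath, hlen⟩ := hconn.exists_path_of_dist u v
    rw [← hlen]
    exact le_of_lt hpath.length_lt
  have hposD : ∀ u v, 0 < (T ^ D) u v := fun u v => hpos D u v (hdist u v)
  set ε : ℝ := univ.inf' univ_nonempty (fun p : V × V => (T ^ D) p.1 p.2) with hεdef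
  have hε : ∀ i j, ε ≤ (T ^ D) i j := fun i j => inf'_le _ (mem_univ (i, j))
  have hε0 : 0 < ε := Finset.lt_inf'_iff _ |>.mpr fun p _ => hposD p.1 p.2
  set r : ℝ := 1 - (Fintype.card V : ℝ) * ε with hr
  have hcard0 : (0 : ℝ) < (Fintype.card V : ℝ) := by exact_mod_cast Fintype.card_pos
  have hr1 : r < 1 := by
    have : 0 < (Fintype.card V : ℝ) * ε := mul_pos hcard0 hε0
    rw [hr]; linarith
  have hr0 : 0 ≤ r := by
    have h1 : (Fintype.card V : ℝ) * ε ≤ ∑ j, (T ^ D) (Classical.arbitrary V) j := by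
      calc (Fintype.card V : ℝ) * ε = ∑ _j : V, ε := by simp [mul_comm]
        _ ≤ ∑ j, (T ^ D) (Classical.arbitrary V) j :=
            Finset.sum_le_sum fun j _ => hε _ j
    rw [hpowrow D] at h1
    rw [hr]; linarith
  -- oscillation bounds
  have hoscD : ∀ x : V → ℝ,
      univ.sup' univ_nonempty ((T ^ D).mulVec x) - univ.inf' univ_nonempty ((T ^ D).mulVec x) ≤
        r * (univ.sup' univ_nonempty x - univ.inf' univ_nonempty x) :=
    fun x => aux_osc_contract (T ^ D) ε hε (hpowrow D) x
  have hosc1 : ∀ x : V → ℝ,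
      univ.sup' univ_nonempty (T.mulVec x) - univ.inf' univ_nonempty (T.mulVec x) ≤
        1 * (univ.sup' univ_nonempty x - univ.inf' univ_nonempty x) := by
    intro x
    have := aux_osc_contract T 0 (fun i j => hTnn i j) hTrow x
    simpa using this
  intro H
  set avg : ℝ := (∑ v, H v) / (Fintype.card V : ℝ) with havg
  set oscH : ℝ := univ.sup' univ_nonempty H - univ.inf' univ_nonempty H with hoscH
  -- main oscillation decay
  have hdecay : ∀ l : ℕ,
      univ.sup' univ_nonempty ((T ^ l).mulVec H) - univ.inf' univ_nonempty ((T ^ l).mulVec H) ≤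
        r ^ (l / D) * oscH := by
    intro l
    have hsplit : T ^ l = (T ^ D) ^ (l / D) * T ^ (l % D) := by
      rw [← pow_mul, ← pow_add]
      congr 1
      exact (Nat.div_add_mod l D).symm ▸ rfl
    have hmv : (T ^ l).mulVec H = ((T ^ D) ^ (l / D)).mulVec ((T ^ (l % D)).mulVec H) := by
      rw [Matrix.mulVec_mulVec, ← hsplit]
    rw [hmv]
    calc univ.sup' univ_nonempty (((T ^ D) ^ (l / D)).mulVec ((T ^ (l % D)).mulVec H)) -
          univ.inf' univ_nonempty (((T ^ D) ^ (l / D)).mulVec ((T ^ (l % D)).mulVec H)) ≤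
        r ^ (l / D) * (univ.sup' univ_nonempty ((T ^ (l % D)).mulVec H) -
          univ.inf' univ_nonempty ((T ^ (l % D)).mulVec H)) :=
          aux_osc_pow (T ^ D) r hr0 hoscD (l / D) _
      _ ≤ r ^ (l / D) * oscH := by
          apply mul_le_mul_of_nonneg_left _ (pow_nonneg hr0 _)
          have := aux_osc_pow T 1 zero_le_one hosc1 (l % D) H
          simpa [hoscH] using this
  -- sum preservation
  have hsumpres : ∀ l : ℕ, ∑ v, (T ^ l).mulVec H v = ∑ v, H v := by
    intro l
    simp only [Matrix.mulVec, dotProduct]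
    rw [Finset.sum_comm]
    simp only [← Finset.sum_mul]
    simp only [hpowcol l, one_mul]
  -- conclude
  rw [tendsto_pi_nhds]
  intro v
  rw [tendsto_iff_dist_tendsto_zero]
  have hglim : Filter.Tendsto (fun l : ℕ => r ^ (l / D) * oscH) Filter.atTop (nhds 0) := by
    have hdiv : Filter.Tendsto (fun l : ℕ => l / D) Filter.atTop Filter.atTop :=
      Filter.tendsto_atTop_atTop.2 fun b => ⟨b * D, fun a ha => (Nat.le_div_iff_mul_le hD0).2 ha⟩
    have hpow : Filter.Tendsto (fun l : ℕ => r ^ (l / D)) Filter.atTop (nhds 0) :=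
      (tendsto_pow_atTop_nhds_zero_of_lt_one hr0 hr1).comp hdiv
    simpa using hpow.mul_const oscH
  apply squeeze_zero (fun l => dist_nonneg) _ hglim
  intro l
  rw [Real.dist_eq]
  set x : V → ℝ := (T ^ l).mulVec H with hx
  set M : ℝ := univ.sup' univ_nonempty x with hMx
  set m : ℝ := univ.inf' univ_nonempty x with hmx
  have hM : ∀ k, x k ≤ M := fun k => le_sup' x (mem_univ k)
  have hm : ∀ k, m ≤ x k := fun k => inf'_le x (mem_univ k)
  have hsum : ∑ k, x k = ∑ k, H k := hsumpres l
  have hub : ∑ k, x k ≤ (Fintype.card V : ℝ) * M := by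
    calc ∑ k, x k ≤ ∑ _k : V, M := Finset.sum_le_sum fun k _ => hM k
      _ = (Fintype.card V : ℝ) * M := by simp [mul_comm]
  have hlb : (Fintype.card V : ℝ) * m ≤ ∑ k, x k := by
    calc (Fintype.card V : ℝ) * m = ∑ _k : V, m := by simp [mul_comm]
      _ ≤ ∑ k, x k := Finset.sum_le_sum fun k _ => hm k
  have havgle : avg ≤ M := by
    rw [havg, ← hsum, div_le_iff₀ hcard0]
    linarith
  have hlavg : m ≤ avg := by
    rw [havg, ← hsum, le_div_iff₀ hcard0]
    linarith
  have hosc : M - m ≤ r ^ (l / D) * oscH := hdecay l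
  have hv1 := hM v
  have hv2 := hm v
  rw [abs_le]
  constructor <;> linarith
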